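/- Let X_0 be a real-valued random variable such that 0 < G(r) < ∞ for every r ≥ 0. Then, writing m_r := E[U_r(X_0)], one has m_r² = o(E[(U_r(X_0))²]) as r → ∞. -/

import Mathlib

open MeasureTheory ProbabilityTheory Filter Asymptotics
open scoped ENNReal Topology NNReal

noncomputable section

/-- The shrinking operator `U_r : ℝ → ℝ` (for `r ≥ 0`):
`U_r(x) = x - r` if `x > r`, `0` if `|x| ≤ r`, and `x + r` if `x < -r`. -/
def shrink (r x : ℝ) : ℝ := if r < x then x - r else if x < -r then x + r else 0

variable {Ω : Type*}

/-- `G(r) := ∫₀^∞ t · P(|X| > t + r) dt`. -/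
def Gfun [MeasurableSpace Ω] (P : Measure Ω) (X : Ω → ℝ) (r : ℝ) : ℝ≥0∞ :=
  ∫⁻ t in Set.Ioi (0 : ℝ), ENNReal.ofReal t * P {ω | t + r < |X ω|}

/-- Strict stationarity of a two-sided sequence of random variables: for all `j, l ∈ ℤ`
and `m ≥ 0`, the random vectors `(X_j, …, X_{j+m})` and `(X_l, …, X_{l+m})` have the
same distribution. -/
def StrictlyStationary [MeasurableSpace Ω] (P : Measure Ω) (X : ℤ → Ω → ℝ) : Prop :=
  ∀ (j l : ℤ) (m : ℕ),
    Measure.map (fun ω => fun i : Fin (m + 1) => X (j + i) ω) P =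
    Measure.map (fun ω => fun i : Fin (m + 1) => X (l + i) ω) P

/-- The correlation coefficient of two real random variables. -/
def corr [MeasurableSpace Ω] (P : Measure Ω) (f g : Ω → ℝ) : ℝ :=
  (∫ ω, (f ω - ∫ x, f x ∂P) * (g ω - ∫ x, g x ∂P) ∂P) /
    (Real.sqrt (∫ ω, (f ω - ∫ x, f x ∂P) ^ 2 ∂P) *
      Real.sqrt (∫ ω, (g ω - ∫ x, g x ∂P) ^ 2 ∂P))

/-- The maximal correlation coefficient `ρ(𝒜, ℬ)`: the supremum of `|Corr(f,g)|` over
square-integrable `f` measurable w.r.t. `𝒜` and `g` measurable w.r.t. `ℬ`. -/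
def maxCorr [mΩ : MeasurableSpace Ω] (P : Measure Ω) (A B : MeasurableSpace Ω) : ℝ :=
  sSup { c | ∃ f g : Ω → ℝ, Measurable[A] f ∧ Measurable[B] g ∧
    MemLp (α := Ω) (m0 := mΩ) f 2 P ∧ MemLp (α := Ω) (m0 := mΩ) g 2 P ∧ c = |@corr Ω mΩ P f g| }

/-- The strong mixing coefficient `α(𝒜, ℬ)`. -/
def alphaMix [MeasurableSpace Ω] (P : Measure Ω) (A B : MeasurableSpace Ω) : ℝ :=
  sSup { c | ∃ s t : Set Ω, MeasurableSet[A] s ∧ MeasurableSet[B] t ∧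
    c = |(P (s ∩ t)).toReal - (P s).toReal * (P t).toReal| }

/-- The σ-field generated by the random variables `X k`, `k ∈ S`. -/
def genFrom [MeasurableSpace Ω] (X : ℤ → Ω → ℝ) (S : Set ℤ) : MeasurableSpace Ω :=
  ⨆ k ∈ S, MeasurableSpace.comap (X k) inferInstance

/-- `ρ(n) = ρ(σ(X_k, k ≤ 0), σ(X_k, k ≥ n))`. -/
def rhoCoef [MeasurableSpace Ω] (P : Measure Ω) (X : ℤ → Ω → ℝ) (n : ℕ) : ℝ :=
  maxCorr P (genFrom X {k | k ≤ 0}) (genFrom X {k | (n : ℤ) ≤ k})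

/-- `α(n) = α(σ(X_k, k ≤ 0), σ(X_k, k ≥ n))`. -/
def alphaCoef [MeasurableSpace Ω] (P : Measure Ω) (X : ℤ → Ω → ℝ) (n : ℕ) : ℝ :=
  alphaMix P (genFrom X {k | k ≤ 0}) (genFrom X {k | (n : ℤ) ≤ k})

/-- `ρ*(n)`: the supremum of `ρ(σ(X_k, k ∈ S), σ(X_k, k ∈ T))` over all pairs of nonempty
disjoint `S, T ⊆ ℤ` with `dist(S,T) ≥ n`. -/
def rhoStarCoef [MeasurableSpace Ω] (P : Measure Ω) (X : ℤ → Ω → ℝ) (n : ℕ) : ℝ :=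
  sSup { c | ∃ S T : Set ℤ, S.Nonempty ∧ T.Nonempty ∧ Disjoint S T ∧
    (∀ s ∈ S, ∀ t ∈ T, (n : ℤ) ≤ |s - t|) ∧
    c = maxCorr P (genFrom X S) (genFrom X T) }

/-- `Y_{k,r} := U_r(X_k) - E[U_r(X_0)]`. -/
def Ymix [MeasurableSpace Ω] (P : Measure Ω) (X : ℤ → Ω → ℝ) (k : ℤ) (r : ℝ) (ω : Ω) : ℝ :=
  shrink r (X k ω) - ∫ ω', shrink r (X 0 ω') ∂P

private lemma shrink_measurable (r : ℝ) : Measurable (shrink r) := by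
  unfold shrink
  exact Measurable.ite (measurableSet_lt measurable_const measurable_id)
    (measurable_id.sub measurable_const)
    (Measurable.ite (measurableSet_lt measurable_id measurable_const)
      (measurable_id.add measurable_const) measurable_const)

private lemma shrink_eq_zero {r x : ℝ} (h : |x| ≤ r) : shrink r x = 0 := by
  rw [abs_le] at h
  unfold shrink
  rw [if_neg (by linarith), if_neg (by linarith)]

private lemma lt_abs_shrink_iff {r t x : ℝ} (hr : 0 ≤ r) (ht : 0 < t) :
    t < |shrink r x| ↔ t + r < |x| := by
  unfold shrink
  by_cases h1 : r < x
  · rw [if_pos h1, abs_of_pos (by linarith : (0:ℝ) < x - r),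
      abs_of_pos (by linarith : (0:ℝ) < x)]
    constructor <;> intro <;> linarith
  · rw [if_neg h1]
    by_cases h2 : x < -r
    · rw [if_pos h2, abs_of_neg (by linarith : x + r < 0),
        abs_of_neg (by linarith : x < (0:ℝ))]
      constructor <;> intro <;> linarith
    · push_neg at h1 h2
      rw [if_neg (by linarith), abs_zero]
      have hxle : |x| ≤ r := abs_le.2 ⟨h2, h1⟩
      constructor
      · intro h; linarith
      · intro h; linarith

open intervalIntegral in
private lemma two_mul_intervalIntegral (y : ℝ) : (∫ s in (0:ℝ)..y, 2 * s) = y ^ 2 := by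
  rw [intervalIntegral.integral_const_mul, integral_id]
  ring

private lemma sq_lintegral_eq_two_G [MeasurableSpace Ω] (P : Measure Ω)
    (X₀ : Ω → ℝ) (hmeas : Measurable X₀) {r : ℝ} (hr : 0 ≤ r) :
    ∫⁻ ω, ENNReal.ofReal (shrink r (X₀ ω) ^ 2) ∂P = 2 * Gfun P X₀ r := by
  have fm : AEMeasurable (fun ω => |shrink r (X₀ ω)|) P :=
    (((shrink_measurable r).comp hmeas).abs).aemeasurable
  have key := lintegral_comp_eq_lintegral_meas_lt_mul P
    (f := fun ω => |shrink r (X₀ ω)|) (g := fun t => 2 * t)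
    (Filter.Eventually.of_forall fun ω => abs_nonneg _) fm
    (fun t _ => ((continuous_const.mul continuous_id).intervalIntegrable 0 t))
    (by
      filter_upwards [self_mem_ae_restrict measurableSet_Ioi] with t ht
      have : (0:ℝ) < t := ht
      positivity)
  have inner : ∀ ω : Ω, (∫ s in (0:ℝ)..(|shrink r (X₀ ω)|), 2 * s)
      = shrink r (X₀ ω) ^ 2 := by
    intro ω
    rw [two_mul_intervalIntegral]
    exact sq_abs _
  simp_rw [inner] at key
  rw [key, Gfun, ← lintegral_const_mul' 2 _ (by norm_num : (2:ℝ≥0∞) ≠ ⊤)]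
  refine setLIntegral_congr_fun measurableSet_Ioi ?_
  intro t ht
  have hset : {a : Ω | t < |shrink r (X₀ a)|} = {ω | t + r < |X₀ ω|} := by
    ext a; exact lt_abs_shrink_iff hr ht
  dsimp only
  rw [hset, ENNReal.ofReal_mul (by norm_num : (0:ℝ) ≤ 2), ENNReal.ofReal_ofNat]
  ring

private lemma integrable_shrink_sq [MeasurableSpace Ω] (P : Measure Ω)
    (X₀ : Ω → ℝ) (hmeas : Measurable X₀) {r : ℝ} (hr : 0 ≤ r)
    (hGlt : Gfun P X₀ r < ⊤) :
    Integrable (fun ω => shrink r (X₀ ω) ^ 2) P := by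
  refine ⟨(((shrink_measurable r).comp hmeas).pow_const 2).aestronglyMeasurable, ?_⟩
  rw [hasFiniteIntegral_iff_ofReal (Filter.Eventually.of_forall fun ω => sq_nonneg _),
    sq_lintegral_eq_two_G P X₀ hmeas hr]
  exact ENNReal.mul_lt_top (by norm_num) hGlt

private lemma tail_tendsto [MeasurableSpace Ω] (P : Measure Ω) [IsProbabilityMeasure P]
    (X₀ : Ω → ℝ) (hmeas : Measurable X₀) :
    Tendsto (fun r : ℝ => P {ω | r < |X₀ ω|}) atTop (𝓝 0) := by
  have h := tendsto_measure_iInter_atTop (μ := P) (s := fun r : ℝ => {ω | r < |X₀ ω|})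
    (fun r => (measurableSet_lt measurable_const hmeas.abs).nullMeasurableSet)
    (fun a b hab ω hω => lt_of_le_of_lt hab hω)
    ⟨0, measure_ne_top P _⟩
  have hempty : ⋂ r : ℝ, {ω | r < |X₀ ω|} = (∅ : Set Ω) := by
    ext ω
    simp only [Set.mem_iInter, Set.mem_setOf_eq, Set.mem_empty_iff_false, iff_false]
    push_neg
    exact ⟨|X₀ ω|, le_refl _⟩
  rwa [hempty, measure_empty] at h

private lemma sq_integral_le_tail_mul [MeasurableSpace Ω] (P : Measure Ω)
    [IsProbabilityMeasure P]
    (X₀ : Ω → ℝ) (hmeas : Measurable X₀) {r : ℝ} (hr : 0 ≤ r)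
    (hGlt : Gfun P X₀ r < ⊤) :
    (∫ ω, shrink r (X₀ ω) ∂P) ^ 2 ≤
      (P {ω | r < |X₀ ω|}).toReal * ∫ ω, shrink r (X₀ ω) ^ 2 ∂P := by
  set A := {ω | r < |X₀ ω|} with hA
  have hAm : MeasurableSet A := measurableSet_lt measurable_const hmeas.abs
  have hint2 := integrable_shrink_sq P X₀ hmeas hr hGlt
  have hmf : Measurable fun ω => shrink r (X₀ ω) := (shrink_measurable r).comp hmeas
  have hmemf : MemLp (fun ω => shrink r (X₀ ω)) 2 P := by
    rw [memLp_two_iff_integrable_sq hmf.aestronglyMeasurable]; exact hint2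
  have hmemfa : MemLp (fun ω => |shrink r (X₀ ω)|) 2 P := by
    have := hmemf.norm
    simpa only [Real.norm_eq_abs] using this
  have hconj : Real.HolderConjugate 2 2 := Real.HolderConjugate.two_two
  set g : Ω → ℝ := A.indicator fun _ => (1:ℝ) with hg
  have hgnn : ∀ ω, 0 ≤ g ω := fun ω => Set.indicator_nonneg (fun _ _ => zero_le_one) ω
  have hCS := integral_mul_le_Lp_mul_Lq_of_nonneg hconj
    (Filter.Eventually.of_forall fun ω => abs_nonneg (shrink r (X₀ ω)))
    (Filter.Eventually.of_forall hgnn)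
    (by rw [ENNReal.ofReal_ofNat]; exact hmemfa)
    (by rw [ENNReal.ofReal_ofNat]; exact (memLp_const 1).indicator hAm)
  have hrpow : ∀ a : ℝ, 0 ≤ a → a ^ (2:ℝ) = a ^ 2 := by
    intro a ha
    rw [show (2:ℝ) = ((2:ℕ):ℝ) by norm_num, Real.rpow_natCast]
  have hmulg : ∀ ω, |shrink r (X₀ ω)| * g ω = |shrink r (X₀ ω)| := by
    intro ω
    by_cases hω : ω ∈ A
    · simp [hg, Set.indicator_of_mem hω]
    · have : |X₀ ω| ≤ r := le_of_not_gt hω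
      simp [hg, Set.indicator_of_notMem hω, shrink_eq_zero this]
  have hgsq : ∀ ω, g ω ^ (2:ℝ) = g ω := by
    intro ω
    by_cases hω : ω ∈ A
    · simp [hg, Set.indicator_of_mem hω]
    · simp [hg, Set.indicator_of_notMem hω, Real.zero_rpow (by norm_num : (2:ℝ) ≠ 0)]
  simp_rw [hmulg, hgsq] at hCS
  have hintg : ∫ ω, g ω ∂P = (P A).toReal := by
    rw [hg, integral_indicator_const (1:ℝ) hAm]
    simp [measureReal_def]
  have habs2 : ∀ ω, |shrink r (X₀ ω)| ^ (2:ℝ) = shrink r (X₀ ω) ^ 2 := by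
    intro ω
    rw [hrpow _ (abs_nonneg _), sq_abs]
  simp_rw [habs2, hintg] at hCS
  have h1 : |∫ ω, shrink r (X₀ ω) ∂P| ≤
      (∫ ω, shrink r (X₀ ω) ^ 2 ∂P) ^ ((1:ℝ)/2) * (P A).toReal ^ ((1:ℝ)/2) := by
    calc |∫ ω, shrink r (X₀ ω) ∂P| ≤ ∫ ω, |shrink r (X₀ ω)| ∂P := by
          simpa [Real.norm_eq_abs] using
            norm_integral_le_integral_norm (μ := P) fun ω => shrink r (X₀ ω)
      _ ≤ _ := hCS
  have hhalf : ∀ a : ℝ, 0 ≤ a → (a ^ ((1:ℝ)/2)) ^ 2 = a := by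
    intro a ha
    rw [← Real.rpow_natCast (a ^ ((1:ℝ)/2)) 2, ← Real.rpow_mul ha]
    norm_num
  have hnn2 : 0 ≤ ∫ ω, shrink r (X₀ ω) ^ 2 ∂P := integral_nonneg fun ω => sq_nonneg _
  calc (∫ ω, shrink r (X₀ ω) ∂P) ^ 2 = |∫ ω, shrink r (X₀ ω) ∂P| ^ 2 := (sq_abs _).symm
    _ ≤ ((∫ ω, shrink r (X₀ ω) ^ 2 ∂P) ^ ((1:ℝ)/2) * (P A).toReal ^ ((1:ℝ)/2)) ^ 2 :=
        pow_le_pow_left₀ (abs_nonneg _) h1 2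
    _ = (P A).toReal * ∫ ω, shrink r (X₀ ω) ^ 2 ∂P := by
        rw [mul_pow, hhalf _ hnn2, hhalf _ ENNReal.toReal_nonneg]
        ring

/-- **Lemma 4.1 (first part).** `m_r² = o(E[(U_r(X_0))²])` as `r → ∞`. -/
theorem mean_sq_littleO_of_G
    [MeasurableSpace Ω] (P : Measure Ω) [IsProbabilityMeasure P]
    (X₀ : Ω → ℝ) (hmeas : Measurable X₀)
    (hG : ∀ r : ℝ, 0 ≤ r → 0 < Gfun P X₀ r ∧ Gfun P X₀ r < ∞) :
    (fun r : ℝ => (∫ ω, shrink r (X₀ ω) ∂P) ^ 2) =o[atTop]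
      fun r : ℝ => ∫ ω, shrink r (X₀ ω) ^ 2 ∂P := by
  rw [isLittleO_iff]
  intro c hc
  have ht := (tail_tendsto P X₀ hmeas).eventually_lt_const
    (show (0:ℝ≥0∞) < ENNReal.ofReal c from ENNReal.ofReal_pos.2 hc)
  filter_upwards [ht, eventually_ge_atTop (0:ℝ)] with r hr1 hr0
  have hGr := hG r hr0
  have hineq := sq_integral_le_tail_mul P X₀ hmeas hr0 hGr.2
  have hnn2 : 0 ≤ ∫ ω, shrink r (X₀ ω) ^ 2 ∂P := integral_nonneg fun ω => sq_nonneg _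
  have htail : (P {ω | r < |X₀ ω|}).toReal ≤ c :=
    ENNReal.toReal_le_of_le_ofReal hc.le hr1.le
  rw [Real.norm_of_nonneg (sq_nonneg _), Real.norm_of_nonneg hnn2]
  calc (∫ ω, shrink r (X₀ ω) ∂P) ^ 2
      ≤ (P {ω | r < |X₀ ω|}).toReal * ∫ ω, shrink r (X₀ ω) ^ 2 ∂P := hineq
    _ ≤ c * ∫ ω, shrink r (X₀ ω) ^ 2 ∂P := mul_le_mul_of_nonneg_right htail hnn2
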